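/- Every impartial game in which every play lasts at most 3 moves (i.e., every game tree of height at most 3) is misère-indistinguishable from exactly one of the following five games: the empty game 0, nim 1, nim 2, nim 3, and the game {*2} whose unique option is nim 2; moreover these five games are pairwise misère-distinguishable. In other words, there are exactly 5 reduced canonical trees of height at most 3. -/

import Mathlib

/-- An impartial game: a position is given by the list of its options
(the positions reachable in one move); both players have the same moves. -/
inductive Game : Type
  | node : List Game → Game

namespace Game

/-- The options of a position. -/
def options : Game → List Game
  | node l => l

/-- Disjunctive sum of two games: a move is made in exactly one component. -/
def add : Game → Game → Game
  | node l, node r =>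
      node ((l.attach.map fun x => add x.1 (node r)) ++
            (r.attach.map fun y => add (node l) y.1))
termination_by g h => sizeOf g + sizeOf h
decreasing_by
  · have := List.sizeOf_lt_of_mem x.2; simp_wf; (try simp only [Game.node.sizeOf_spec] at *); omega
  · have := List.sizeOf_lt_of_mem y.2; simp_wf; (try simp only [Game.node.sizeOf_spec] at *); omega

/-- Misère win (for the player to move): the game has no options,
or some option is a misère loss. -/
def MisereWin : Game → Prop
  | node l => l = [] ∨ ∃ x : {a // a ∈ l}, ¬ MisereWin x.1
decreasing_by
  simp_wf; have := List.sizeOf_lt_of_mem x.2; omega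

/-- Misère indistinguishability: adding any game `T` yields the same misère outcome. -/
def Indist (G H : Game) : Prop :=
  ∀ T : Game, MisereWin (add G T) ↔ MisereWin (add H T)

/-- The Nim-heap of size `n`, whose options are `nim 0, …, nim (n-1)`. -/
def nim : ℕ → Game
  | 0 => node []
  | n + 1 => node ((nim n).options ++ [nim n])

/-- Normal-play win (for the player to move): some option is a normal-play loss.
A player unable to move loses. -/
def NormalWin : Game → Prop
  | node l => ∃ x : {a // a ∈ l}, ¬ NormalWin x.1
decreasing_by
  simp_wf; have := List.sizeOf_lt_of_mem x.2; omega

/-- The Grundy value: the mex of the Grundy values of the options. -/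
noncomputable def grundy : Game → ℕ
  | node l => sInf {n : ℕ | ∀ x : {a // a ∈ l}, grundy x.1 ≠ n}
decreasing_by
  simp_wf; have := List.sizeOf_lt_of_mem x.2; omega

/-- The height of a game: the maximal number of moves in a play from it. -/
def height : Game → ℕ
  | node l => (l.attach.map fun x => height x.1 + 1).foldr max 0
decreasing_by
  simp_wf; have := List.sizeOf_lt_of_mem x.2; omega

/-- A canonical tree: duplicate options are removed, hereditarily. -/
def Canonical : Game → Prop
  | node l => l.Nodup ∧ ∀ x : {a // a ∈ l}, Canonical x.1
decreasing_by
  simp_wf; have := List.sizeOf_lt_of_mem x.2; omega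

/-- Extensional (set-theoretic) equality of game trees. -/
def ExtEq : Game → Game → Prop
  | node l, node r =>
      (∀ x : {a // a ∈ l}, ∃ y : {b // b ∈ r}, ExtEq x.1 y.1) ∧
      (∀ y : {b // b ∈ r}, ∃ x : {a // a ∈ l}, ExtEq x.1 y.1)
termination_by g _ => sizeOf g
decreasing_by
  · have := List.sizeOf_lt_of_mem x.2; simp_wf; (try simp only [Game.node.sizeOf_spec] at *); omega
  · have := List.sizeOf_lt_of_mem x.2; simp_wf; (try simp only [Game.node.sizeOf_spec] at *); omega

/-- The disjunctive sum of `n` copies of a game. -/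
def copies : ℕ → Game → Game
  | 0, _ => node []
  | n + 1, g => add g (copies n g)

/-- `G` is a reducer of `H` if `H` is obtained from `G` by adding reversible
moves `R₁, R₂, …`: the options of `H` are those of `G` together with the `Rⱼ`,
each `Rⱼ` having `G` among its options; when `G` is empty one additionally
requires `H` to be a misère win. -/
def Reducer (G H : Game) : Prop :=
  ∃ Rs : List Game,
    (∀ x, x ∈ H.options ↔ x ∈ G.options ∨ x ∈ Rs) ∧
    (∀ R ∈ Rs, G ∈ R.options) ∧
    (G.options = [] → MisereWin H)

/-- A canonical tree is reduced if its only reducer is itself (as a set of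
options) and all of its options are reduced. -/
def Reduced : Game → Prop
  | node l =>
      (∀ G, Reducer G (node l) → ∀ x, x ∈ G.options ↔ x ∈ l) ∧
      ∀ x : {a // a ∈ l}, Reduced x.1
decreasing_by
  simp_wf; have := List.sizeOf_lt_of_mem x.2; omega

end Game

namespace Game

/-- Induction principle for games. -/
theorem ind (P : Game → Prop) (h : ∀ l : List Game, (∀ x ∈ l, P x) → P (node l)) :
    ∀ g, P g
  | node l => h l (fun x hx => ind P h x)
decreasing_by
  simp_wf; have := List.sizeOf_lt_of_mem hx; omega

@[simp] theorem options_node (l : List Game) : options (node l) = l := rfl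

theorem add_node (l r : List Game) :
    add (node l) (node r) =
      node ((l.map fun x => add x (node r)) ++ (r.map fun y => add (node l) y)) := by
  rw [add]
  simp [List.attach_map_val]

theorem win_node (l : List Game) :
    MisereWin (node l) ↔ l = [] ∨ ∃ x ∈ l, ¬ MisereWin x := by
  rw [MisereWin]
  exact or_congr Iff.rfl
    ⟨fun ⟨⟨a, ha⟩, h⟩ => ⟨a, ha, h⟩, fun ⟨a, ha, h⟩ => ⟨⟨a, ha⟩, h⟩⟩

theorem win_add_node (l r : List Game) :
    MisereWin (add (node l) (node r)) ↔
      (l = [] ∧ r = []) ∨ (∃ x ∈ l, ¬ MisereWin (add x (node r))) ∨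
        (∃ y ∈ r, ¬ MisereWin (add (node l) y)) := by
  rw [add_node, win_node]
  constructor
  · rintro (h | ⟨x, hx, hwx⟩)
    · rw [List.append_eq_nil_iff, List.map_eq_nil_iff, List.map_eq_nil_iff] at h
      exact Or.inl h
    · rcases List.mem_append.mp hx with hx' | hx'
      · obtain ⟨a, ha, rfl⟩ := List.mem_map.mp hx'
        exact Or.inr (Or.inl ⟨a, ha, hwx⟩)
      · obtain ⟨a, ha, rfl⟩ := List.mem_map.mp hx'
        exact Or.inr (Or.inr ⟨a, ha, hwx⟩)
  · rintro (⟨h1, h2⟩ | ⟨x, hx, hw⟩ | ⟨y, hy, hw⟩)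
    · subst h1; subst h2; exact Or.inl rfl
    · exact Or.inr ⟨_, List.mem_append.mpr (Or.inl (List.mem_map_of_mem hx)), hw⟩
    · exact Or.inr ⟨_, List.mem_append.mpr (Or.inr (List.mem_map_of_mem hy)), hw⟩

theorem indist_refl (g : Game) : Indist g g := fun _ => Iff.rfl

theorem indist_symm {g h : Game} (H : Indist g h) : Indist h g := fun T => (H T).symm

theorem indist_trans {g h k : Game} (H1 : Indist g h) (H2 : Indist h k) : Indist g k :=
  fun T => (H1 T).trans (H2 T)

theorem win_add_nil (g : Game) : MisereWin (add g (node [])) ↔ MisereWin g := by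
  induction g using Game.ind with
  | _ l ih =>
    rw [win_add_node, win_node]
    constructor
    · rintro (⟨h, -⟩ | ⟨x, hx, hw⟩ | ⟨y, hy, -⟩)
      · exact Or.inl h
      · exact Or.inr ⟨x, hx, fun w => hw ((ih x hx).2 w)⟩
      · cases hy
    · rintro (h | ⟨x, hx, hw⟩)
      · exact Or.inl ⟨h, rfl⟩
      · exact Or.inr (Or.inl ⟨x, hx, fun w => hw ((ih x hx).1 w)⟩)

/-- Congruence: replacing options by indistinguishable ones. -/
theorem indist_congr {l m : List Game}
    (h1 : ∀ x ∈ l, ∃ y ∈ m, Indist x y)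
    (h2 : ∀ y ∈ m, ∃ x ∈ l, Indist x y) :
    Indist (node l) (node m) := by
  intro T
  induction T using Game.ind with
  | _ t iht =>
    constructor
    · intro hw
      rw [win_add_node] at hw
      rw [win_add_node]
      rcases hw with ⟨hl, ht⟩ | ⟨x, hx, hwx⟩ | ⟨y, hy, hwy⟩
      · refine Or.inl ⟨?_, ht⟩
        cases m with
        | nil => rfl
        | cons b m' =>
          obtain ⟨x, hx, -⟩ := h2 b (List.mem_cons_self (a := b) (l := m'))
          rw [hl] at hx; cases hx
      · obtain ⟨y, hy, hI⟩ := h1 x hx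
        exact Or.inr (Or.inl ⟨y, hy, fun w => hwx ((hI (node t)).2 w)⟩)
      · exact Or.inr (Or.inr ⟨y, hy, fun w => hwy ((iht y hy).2 w)⟩)
    · intro hw
      rw [win_add_node] at hw
      rw [win_add_node]
      rcases hw with ⟨hm, ht⟩ | ⟨y, hy, hwy⟩ | ⟨y, hy, hwy⟩
      · refine Or.inl ⟨?_, ht⟩
        cases l with
        | nil => rfl
        | cons a l' =>
          obtain ⟨y, hy, -⟩ := h1 a (List.mem_cons_self (a := a) (l := l'))
          rw [hm] at hy; cases hy
      · obtain ⟨x, hx, hI⟩ := h2 y hy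
        exact Or.inr (Or.inl ⟨x, hx, fun w => hwy ((hI (node t)).1 w)⟩)
      · exact Or.inr (Or.inr ⟨y, hy, fun w => hwy ((iht y hy).1 w)⟩)

/-- Reversibility: adding options each of which has the original game among its
options does not change the game (with the usual proviso). -/
theorem reducer_indist {gl hl Rs : List Game}
    (hmem : ∀ x, x ∈ hl ↔ x ∈ gl ∨ x ∈ Rs)
    (hrev : ∀ R ∈ Rs, node gl ∈ R.options)
    (hpro : gl = [] → MisereWin (node hl)) :
    Indist (node gl) (node hl) := by
  intro T
  induction T using Game.ind with
  | _ t iht =>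
    constructor
    · intro hw
      rw [win_add_node] at hw
      rw [win_add_node]
      rcases hw with ⟨h1, h2⟩ | ⟨x, hx, hwx⟩ | ⟨y, hy, hwy⟩
      · subst h1; subst h2
        have hw := hpro rfl
        rw [win_node] at hw
        rcases hw with h | ⟨x, hx, hwx⟩
        · exact Or.inl ⟨h, rfl⟩
        · exact Or.inr (Or.inl ⟨x, hx, fun w => hwx ((win_add_nil x).1 w)⟩)
      · exact Or.inr (Or.inl ⟨x, (hmem x).2 (Or.inl hx), hwx⟩)
      · exact Or.inr (Or.inr ⟨y, hy, fun w => hwy ((iht y hy).2 w)⟩)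
    · intro hw
      rw [win_add_node] at hw
      rcases hw with ⟨h1, h2⟩ | ⟨x, hx, hwx⟩ | ⟨y, hy, hwy⟩
      · subst h2
        have hgl : gl = [] := by
          cases gl with
          | nil => rfl
          | cons a gl' =>
            have := (hmem a).2 (Or.inl (List.mem_cons_self (a := a) (l := gl')))
            rw [h1] at this; cases this
        rw [win_add_node]; exact Or.inl ⟨hgl, rfl⟩
      · rcases (hmem x).1 hx with hxg | hxR
        · rw [win_add_node]; exact Or.inr (Or.inl ⟨x, hxg, hwx⟩)
        · obtain ⟨xl⟩ := x
          have hg : node gl ∈ xl := hrev _ hxR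
          rw [win_add_node] at hwx
          push_neg at hwx
          exact hwx.2.1 (node gl) hg
      · rw [win_add_node]; exact Or.inr (Or.inr ⟨y, hy, fun w => hwy ((iht y hy).1 w)⟩)

theorem nim1_eq : nim 1 = node [node []] := rfl
theorem nim2_eq : nim 2 = node [node [], nim 1] := rfl
theorem nim3_eq : nim 3 = node [node [], nim 1, nim 2] := rfl

theorem foldr_max_le {L : List ℕ} {n : ℕ} : L.foldr max 0 ≤ n ↔ ∀ a ∈ L, a ≤ n := by
  induction L with
  | nil => simp
  | cons a L ih => simp [Nat.max_le, ih]

theorem height_node (l : List Game) :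
    height (node l) = (l.map fun x => height x + 1).foldr max 0 := by
  rw [height]
  simp [List.attach_map_val]

theorem height_le_succ {l : List Game} {n : ℕ} :
    height (node l) ≤ n + 1 ↔ ∀ x ∈ l, height x ≤ n := by
  rw [height_node, foldr_max_le]
  constructor
  · intro h x hx
    have := h _ (List.mem_map_of_mem hx)
    omega
  · intro h a ha
    obtain ⟨x, hx, rfl⟩ := List.mem_map.mp ha
    have := h x hx
    omega

theorem eq_nil_of_height_le_zero {g : Game} (h : height g ≤ 0) : g = node [] := by
  obtain ⟨l⟩ := g
  cases l with
  | nil => rfl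
  | cons a t =>
    rw [height_node] at h
    simp [Nat.max_le] at h

theorem classify1 {g : Game} (h : height g ≤ 1) :
    Indist g (node []) ∨ Indist g (nim 1) := by
  obtain ⟨l⟩ := g
  have hx : ∀ x ∈ l, x = node [] :=
    fun x hx => eq_nil_of_height_le_zero (height_le_succ.1 h x hx)
  cases l with
  | nil => exact Or.inl (indist_refl _)
  | cons a t =>
    right
    rw [nim1_eq]
    apply indist_congr
    · intro x hxm
      exact ⟨node [], by simp, by rw [hx x hxm]; exact indist_refl _⟩
    · intro y hy
      simp at hy; subst hy
      exact ⟨a, by simp, by rw [hx a (by simp)]; exact indist_refl _⟩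

/-- `{*1} ≡ 0`. -/
theorem indist_nil_s1 : Indist (node []) (node [nim 1]) := by
  apply reducer_indist (Rs := [nim 1])
  · intro x; simp
  · intro R hR
    simp at hR; subst hR
    rw [nim1_eq]; simp
  · intro _
    rw [win_node]
    exact Or.inr ⟨nim 1, by simp, by simp [nim, win_node]⟩

theorem classify2 {g : Game} (h : height g ≤ 2) :
    Indist g (node []) ∨ Indist g (nim 1) ∨ Indist g (nim 2) := by
  obtain ⟨l⟩ := g
  have hx : ∀ x ∈ l, Indist x (node []) ∨ Indist x (nim 1) :=
    fun x hx => classify1 (height_le_succ.1 h x hx)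
  by_cases p0 : ∃ x ∈ l, Indist x (node [])
  · by_cases p1 : ∃ x ∈ l, Indist x (nim 1)
    · right; right
      rw [nim2_eq]
      apply indist_congr
      · intro x hxl
        rcases hx x hxl with h' | h'
        · exact ⟨node [], by simp, h'⟩
        · exact ⟨nim 1, by simp, h'⟩
      · intro y hy
        simp only [List.mem_cons, List.not_mem_nil, or_false] at hy
        rcases hy with rfl | rfl
        · exact p0
        · exact p1
    · right; left
      rw [nim1_eq]
      apply indist_congr
      · intro x hxl
        rcases hx x hxl with h' | h'
        · exact ⟨node [], by simp, h'⟩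
        · exact absurd ⟨x, hxl, h'⟩ p1
      · intro y hy
        simp at hy; subst hy
        exact p0
  · by_cases p1 : ∃ x ∈ l, Indist x (nim 1)
    · left
      have step1 : Indist (node l) (node [nim 1]) := by
        apply indist_congr
        · intro x hxl
          rcases hx x hxl with h' | h'
          · exact absurd ⟨x, hxl, h'⟩ p0
          · exact ⟨nim 1, by simp, h'⟩
        · intro y hy
          simp at hy; subst hy
          exact p1
      exact indist_trans step1 (indist_symm indist_nil_s1)
    · left
      cases l with
      | nil => exact indist_refl _
      | cons a t =>
        rcases hx a (by simp) with h' | h'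
        · exact absurd ⟨a, by simp, h'⟩ p0
        · exact absurd ⟨a, by simp, h'⟩ p1

/-- `{*1, *2} ≡ 0`. -/
theorem indist_nil_s12 : Indist (node []) (node [nim 1, nim 2]) := by
  apply reducer_indist (Rs := [nim 1, nim 2])
  · intro x; simp
  · intro R hR
    simp only [List.mem_cons, List.not_mem_nil, or_false] at hR
    rcases hR with rfl | rfl
    · rw [nim1_eq]; simp
    · rw [nim2_eq]; simp
  · intro _
    rw [win_node]
    exact Or.inr ⟨nim 1, by simp, by simp [nim, win_node]⟩

/-- `{0, *2} ≡ *1`. -/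
theorem indist_s1_s02 : Indist (nim 1) (node [node [], nim 2]) := by
  rw [nim1_eq]
  apply reducer_indist (Rs := [nim 2])
  · intro x; simp
  · intro R hR
    simp at hR; subst hR
    rw [nim2_eq, ← nim1_eq]; simp
  · intro h; simp at h

theorem classify3 {g : Game} (h : height g ≤ 3) :
    Indist g (node []) ∨ Indist g (nim 1) ∨ Indist g (nim 2) ∨ Indist g (nim 3) ∨
      Indist g (node [nim 2]) := by
  obtain ⟨l⟩ := g
  have hx : ∀ x ∈ l, Indist x (node []) ∨ Indist x (nim 1) ∨ Indist x (nim 2) :=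
    fun x hx => classify2 (height_le_succ.1 h x hx)
  by_cases p0 : ∃ x ∈ l, Indist x (node [])
  · by_cases p1 : ∃ x ∈ l, Indist x (nim 1)
    · by_cases p2 : ∃ x ∈ l, Indist x (nim 2)
      · -- {0,*1,*2} = *3
        refine Or.inr (Or.inr (Or.inr (Or.inl ?_)))
        rw [nim3_eq]
        apply indist_congr
        · intro x hxl
          rcases hx x hxl with h' | h' | h'
          · exact ⟨node [], by simp, h'⟩
          · exact ⟨nim 1, by simp, h'⟩
          · exact ⟨nim 2, by simp, h'⟩
        · intro y hy
          simp only [List.mem_cons, List.not_mem_nil, or_false] at hy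
          rcases hy with rfl | rfl | rfl
          exacts [p0, p1, p2]
      · -- {0,*1} = *2
        refine Or.inr (Or.inr (Or.inl ?_))
        rw [nim2_eq]
        apply indist_congr
        · intro x hxl
          rcases hx x hxl with h' | h' | h'
          · exact ⟨node [], by simp, h'⟩
          · exact ⟨nim 1, by simp, h'⟩
          · exact absurd ⟨x, hxl, h'⟩ p2
        · intro y hy
          simp only [List.mem_cons, List.not_mem_nil, or_false] at hy
          rcases hy with rfl | rfl
          exacts [p0, p1]
    · by_cases p2 : ∃ x ∈ l, Indist x (nim 2)
      · -- {0,*2} ≡ *1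
        refine Or.inr (Or.inl ?_)
        have step1 : Indist (node l) (node [node [], nim 2]) := by
          apply indist_congr
          · intro x hxl
            rcases hx x hxl with h' | h' | h'
            · exact ⟨node [], by simp, h'⟩
            · exact absurd ⟨x, hxl, h'⟩ p1
            · exact ⟨nim 2, by simp, h'⟩
          · intro y hy
            simp only [List.mem_cons, List.not_mem_nil, or_false] at hy
            rcases hy with rfl | rfl
            exacts [p0, p2]
        exact indist_trans step1 (indist_symm indist_s1_s02)
      · -- {0} = *1
        refine Or.inr (Or.inl ?_)
        rw [nim1_eq]
        apply indist_congr
        · intro x hxl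
          rcases hx x hxl with h' | h' | h'
          · exact ⟨node [], by simp, h'⟩
          · exact absurd ⟨x, hxl, h'⟩ p1
          · exact absurd ⟨x, hxl, h'⟩ p2
        · intro y hy
          simp at hy; subst hy
          exact p0
  · by_cases p1 : ∃ x ∈ l, Indist x (nim 1)
    · by_cases p2 : ∃ x ∈ l, Indist x (nim 2)
      · -- {*1,*2} ≡ 0
        refine Or.inl ?_
        have step1 : Indist (node l) (node [nim 1, nim 2]) := by
          apply indist_congr
          · intro x hxl
            rcases hx x hxl with h' | h' | h'
            · exact absurd ⟨x, hxl, h'⟩ p0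
            · exact ⟨nim 1, by simp, h'⟩
            · exact ⟨nim 2, by simp, h'⟩
          · intro y hy
            simp only [List.mem_cons, List.not_mem_nil, or_false] at hy
            rcases hy with rfl | rfl
            exacts [p1, p2]
        exact indist_trans step1 (indist_symm indist_nil_s12)
      · -- {*1} ≡ 0
        refine Or.inl ?_
        have step1 : Indist (node l) (node [nim 1]) := by
          apply indist_congr
          · intro x hxl
            rcases hx x hxl with h' | h' | h'
            · exact absurd ⟨x, hxl, h'⟩ p0
            · exact ⟨nim 1, by simp, h'⟩
            · exact absurd ⟨x, hxl, h'⟩ p2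
          · intro y hy
            simp at hy; subst hy
            exact p1
        exact indist_trans step1 (indist_symm indist_nil_s1)
    · by_cases p2 : ∃ x ∈ l, Indist x (nim 2)
      · -- {*2}
        refine Or.inr (Or.inr (Or.inr (Or.inr ?_)))
        apply indist_congr
        · intro x hxl
          rcases hx x hxl with h' | h' | h'
          · exact absurd ⟨x, hxl, h'⟩ p0
          · exact absurd ⟨x, hxl, h'⟩ p1
          · exact ⟨nim 2, by simp, h'⟩
        · intro y hy
          simp at hy; subst hy
          exact p2
      · left
        cases l with
        | nil => exact indist_refl _
        | cons a t =>
          rcases hx a (by simp) with h' | h' | h'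
          · exact absurd ⟨a, by simp, h'⟩ p0
          · exact absurd ⟨a, by simp, h'⟩ p1
          · exact absurd ⟨a, by simp, h'⟩ p2

-- concrete outcome computations
theorem w0 : MisereWin (node []) := by simp [win_node]
theorem w1 : ¬ MisereWin (nim 1) := by simp [nim, win_node]
theorem w2 : MisereWin (nim 2) := by simp [nim, win_node]
theorem w3 : MisereWin (nim 3) := by simp [nim, win_node]
theorem wS : ¬ MisereWin (node [nim 2]) := by simp [nim, win_node]
theorem A02 : MisereWin (add (node []) (nim 2)) := by simp [nim, add_node, win_node]
theorem A22 : ¬ MisereWin (add (nim 2) (nim 2)) := by simp [nim, add_node, win_node]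
theorem A03 : MisereWin (add (node []) (nim 3)) := by simp [nim, add_node, win_node]
theorem A33 : ¬ MisereWin (add (nim 3) (nim 3)) := by simp [nim, add_node, win_node]
theorem A32 : MisereWin (add (nim 3) (nim 2)) := by simp [nim, add_node, win_node]
theorem A1S : MisereWin (add (nim 1) (node [nim 2])) := by simp [nim, add_node, win_node]
theorem ASS : ¬ MisereWin (add (node [nim 2]) (node [nim 2])) := by
  simp [nim, add_node, win_node]

theorem DT {a b : Game} (T : Game) (h1 : MisereWin (add a T)) (h2 : ¬ MisereWin (add b T)) :
    ∃ T : Game, ¬ (MisereWin (add a T) ↔ MisereWin (add b T)) :=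
  ⟨T, fun h => h2 (h.1 h1)⟩

theorem DT' {a b : Game} (T : Game) (h1 : ¬ MisereWin (add a T)) (h2 : MisereWin (add b T)) :
    ∃ T : Game, ¬ (MisereWin (add a T) ↔ MisereWin (add b T)) :=
  ⟨T, fun h => h1 (h.2 h2)⟩

theorem D0 {a b : Game} (h1 : MisereWin a) (h2 : ¬ MisereWin b) :
    ∃ T : Game, ¬ (MisereWin (add a T) ↔ MisereWin (add b T)) :=
  DT (node []) ((win_add_nil a).2 h1) (fun w => h2 ((win_add_nil b).1 w))

theorem D0' {a b : Game} (h1 : ¬ MisereWin a) (h2 : MisereWin b) :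
    ∃ T : Game, ¬ (MisereWin (add a T) ↔ MisereWin (add b T)) :=
  DT' (node []) (fun w => h1 ((win_add_nil a).1 w)) ((win_add_nil b).2 h2)

theorem pairwise_distinct :
    ∀ r ∈ ([Game.node [], nim 1, nim 2, nim 3, Game.node [nim 2]] : List Game),
      ∀ r' ∈ ([Game.node [], nim 1, nim 2, nim 3, Game.node [nim 2]] : List Game),
        r ≠ r' → ∃ T : Game, ¬ (MisereWin (add r T) ↔ MisereWin (add r' T)) := by
  intro r hr r' hr' hne
  simp only [List.mem_cons, List.not_mem_nil, or_false] at hr hr'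
  rcases hr with rfl | rfl | rfl | rfl | rfl <;>
    rcases hr' with rfl | rfl | rfl | rfl | rfl
  · exact absurd rfl hne
  · exact D0 w0 w1
  · exact DT (nim 2) A02 A22
  · exact DT (nim 3) A03 A33
  · exact D0 w0 wS
  · exact D0' w1 w0
  · exact absurd rfl hne
  · exact D0' w1 w2
  · exact D0' w1 w3
  · exact DT (node [nim 2]) A1S ASS
  · exact DT' (nim 2) A22 A02
  · exact D0 w2 w1
  · exact absurd rfl hne
  · exact DT' (nim 2) A22 A32
  · exact D0 w2 wS
  · exact DT' (nim 3) A33 A03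
  · exact D0 w3 w1
  · exact DT (nim 2) A32 A22
  · exact absurd rfl hne
  · exact D0 w3 wS
  · exact D0' wS w0
  · exact DT' (node [nim 2]) ASS A1S
  · exact D0' wS w2
  · exact D0' wS w3
  · exact absurd rfl hne

end Game

open Game in
/-- Every impartial game of height at most 3 is
misère-indistinguishable from exactly one of the five games
`0, *1, *2, *3, {*2}`, and these five games are pairwise
misère-distinguishable: there are exactly 5 reduced canonical trees of
height at most 3. -/
theorem stmt17 :
    (∀ g : Game, height g ≤ 3 →
      ∃! r : Game,
        r ∈ ([Game.node [], nim 1, nim 2, nim 3, Game.node [nim 2]] : List Game) ∧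
        Indist g r) ∧
    (∀ r ∈ ([Game.node [], nim 1, nim 2, nim 3, Game.node [nim 2]] : List Game),
      ∀ r' ∈ ([Game.node [], nim 1, nim 2, nim 3, Game.node [nim 2]] : List Game),
        r ≠ r' → ∃ T : Game, ¬ (MisereWin (add r T) ↔ MisereWin (add r' T))) := by

  refine ⟨?_, pairwise_distinct⟩
  intro g hg
  have h5 := classify3 hg
  have key : ∃ r ∈ ([Game.node [], nim 1, nim 2, nim 3, Game.node [nim 2]] : List Game),
      Indist g r := by
    rcases h5 with h | h | h | h | h
    · exact ⟨_, by simp, h⟩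
    · exact ⟨_, by simp, h⟩
    · exact ⟨_, by simp, h⟩
    · exact ⟨_, by simp, h⟩
    · exact ⟨_, by simp, h⟩
  obtain ⟨r, hrL, hI⟩ := key
  refine ⟨r, ⟨hrL, hI⟩, ?_⟩
  rintro r' ⟨hr'L, hI'⟩
  by_contra hne
  obtain ⟨T, hT⟩ := pairwise_distinct r' hr'L r hrL hne
  exact hT ((hI' T).symm.trans (hI T))
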